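/- Let C be a finite candidate set with at least two candidates and let S be a Condorcet consistent tournament solution on C. Then S-Approval is monotonic if and only if S is exclusive monotonic and S satisfies exclusive negative monotonicity (ENM). -/

import Mathlib

open scoped Classical

/-- A tournament on `C`: an irreflexive relation such that for all distinct
`a b` exactly one of `r a b`, `r b a` holds. -/
def IsTournament {C : Type*} (r : C → C → Prop) : Prop :=
  (∀ a : C, ¬ r a a) ∧ ∀ a b : C, a ≠ b → (r a b ↔ ¬ r b a)

/-- The `S`-Approval score of candidate `c` in election `E`: the number of
votes `T` of `E` with `c ∈ S T`. -/
noncomputable def approvalScore {C : Type*} (S : (C → C → Prop) → Set C)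
    (E : List (C → C → Prop)) (c : C) : ℕ :=
  (E.map (fun r => if c ∈ S r then 1 else 0)).sum

/-- The `S`-Approval winner set of election `E`: candidates of maximum score. -/
def winners {C : Type*} (S : (C → C → Prop) → Set C)
    (E : List (C → C → Prop)) : Set C :=
  {c | ∀ d : C, approvalScore S E d ≤ approvalScore S E c}

/-- `r'` is obtained from `r` by improving candidate `c`: the two relations
agree on all pairs of candidates distinct from `c`, and the outneighborhood
of `c` only grows. -/
def ImprovedBy {C : Type*} (r r' : C → C → Prop) (c : C) : Prop :=
  (∀ a b : C, a ≠ c → b ≠ c → (r a b ↔ r' a b)) ∧ ∀ b : C, r c b → r' c b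

/-- `w` is the source (Condorcet winner) of the tournament `r`. -/
def IsSource {C : Type*} (r : C → C → Prop) (w : C) : Prop :=
  ∀ b : C, b ≠ w → r w b

/-- A tournament solution is Condorcet consistent if on every tournament
having a source `w` it selects exactly `{w}`. -/
def CondorcetConsistent {C : Type*} (S : (C → C → Prop) → Set C) : Prop :=
  ∀ r : C → C → Prop, IsTournament r → ∀ w : C, IsSource r w → S r = {w}

/-- Exclusive monotonicity of a tournament solution. -/
def ExclusiveMonotonic {C : Type*} (S : (C → C → Prop) → Set C) : Prop :=
  ∀ (r r' : C → C → Prop) (c : C), IsTournament r → IsTournament r' →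
    ImprovedBy r r' c → c ∈ S r → c ∈ S r' ∧ S r' ⊆ S r

/-- Exclusive negative monotonicity (ENM) of a tournament solution. -/
def ENM {C : Type*} (S : (C → C → Prop) → Set C) : Prop :=
  ∀ (r r' : C → C → Prop) (c : C), IsTournament r → IsTournament r' →
    ImprovedBy r r' c → c ∉ S r → ¬ S r' ⊆ S r → c ∈ S r'

/-- `S`-Approval is monotonic: improving a winning candidate in every vote
keeps it winning. -/
def ApprovalMonotonic {C : Type*} (S : (C → C → Prop) → Set C) : Prop :=
  ∀ (E E' : List (C → C → Prop)) (c : C),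
    (∀ r ∈ E, IsTournament r) → (∀ r ∈ E', IsTournament r) →
    List.Forall₂ (fun r r' => ImprovedBy r r' c) E E' →
    c ∈ winners S E → c ∈ winners S E'

/-- A tournament with prescribed source `d`, built from a well-ordering. -/
noncomputable def srcT {C : Type*} (d : C) : C → C → Prop :=
  fun a b => a ≠ b ∧ (a = d ∨ (b ≠ d ∧ WellOrderingRel a b))

lemma srcT_tournament {C : Type*} (d : C) : IsTournament (srcT d) := by
  constructor
  · intro a h; exact h.1 rfl
  · intro a b hab
    constructor
    · rintro ⟨hne, h⟩ ⟨hne', h'⟩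
      rcases h with rfl | ⟨hb, hw⟩
      · rcases h' with rfl | ⟨hb', _⟩
        · exact hne rfl
        · exact hb' rfl
      · rcases h' with rfl | ⟨_, hw'⟩
        · exact hb rfl
        · exact (asymm hw) hw'
    · intro h
      refine ⟨hab, ?_⟩
      by_cases had : a = d
      · exact Or.inl had
      · right
        refine ⟨fun hbd => h ⟨Ne.symm hab, Or.inl hbd⟩, ?_⟩
        rcases trichotomous_of WellOrderingRel a b with hw | rfl | hw
        · exact hw
        · exact absurd rfl hab
        · exact absurd ⟨Ne.symm hab, Or.inr ⟨had, hw⟩⟩ h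

lemma srcT_source {C : Type*} (d : C) : IsSource (srcT d) d :=
  fun b hb => ⟨Ne.symm hb, Or.inl rfl⟩

lemma improvedBy_refl {C : Type*} (r : C → C → Prop) (c : C) :
    ImprovedBy r r c :=
  ⟨fun _ _ _ _ => Iff.rfl, fun _ h => h⟩

lemma approvalScore_nil {C : Type*} (S : (C → C → Prop) → Set C) (c : C) :
    approvalScore S [] c = 0 := rfl

lemma approvalScore_cons {C : Type*} (S : (C → C → Prop) → Set C)
    (r : C → C → Prop) (E : List (C → C → Prop)) (c : C) :
    approvalScore S (r :: E) c = (if c ∈ S r then 1 else 0) + approvalScore S E c := by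
  simp [approvalScore]

lemma score_swap {C : Type*} (S : (C → C → Prop) → Set C)
    (hEM : ExclusiveMonotonic S) (hENM : ENM S)
    {E E' : List (C → C → Prop)} {c : C}
    (hE : ∀ r ∈ E, IsTournament r) (hE' : ∀ r ∈ E', IsTournament r)
    (h : List.Forall₂ (fun r r' => ImprovedBy r r' c) E E') (d : C) :
    approvalScore S E' d + approvalScore S E c ≤
      approvalScore S E' c + approvalScore S E d := by
  induction h with
  | nil => simp [approvalScore_nil]
  | @cons a b l₁ l₂ hab htail ih =>
    have ha : IsTournament a := hE a List.mem_cons_self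
    have hb : IsTournament b := hE' b List.mem_cons_self
    have ih' := ih (fun r hr => hE r (List.mem_cons_of_mem _ hr))
      (fun r hr => hE' r (List.mem_cons_of_mem _ hr))
    have head : (if d ∈ S b then 1 else 0) + (if c ∈ S a then 1 else 0) ≤
        (if c ∈ S b then 1 else 0) + (if d ∈ S a then 1 else 0) := by
      by_cases hc : c ∈ S a
      · obtain ⟨hc', hsub⟩ := hEM a b c ha hb hab hc
        by_cases hd' : d ∈ S b
        · simp [hc, hc', hd', hsub hd']
        · simp [hc, hc', hd']
      · by_cases hsub : S b ⊆ S a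
        · by_cases hd' : d ∈ S b
          · simp [hc, hd', hsub hd']
          · simp [hc, hd']
        · have hc' := hENM a b c ha hb hab hc hsub
          simp only [hc, hc', if_true, if_false]
          split_ifs <;> omega
    simp only [approvalScore_cons]
    omega

/-- for a Condorcet consistent tournament solution `S` on a set
of at least two candidates, `S`-Approval is monotonic iff `S` is exclusive
monotonic and satisfies ENM. -/
theorem stmt_2 {C : Type*} [Finite C] (hcard : 2 ≤ Nat.card C)
    (S : (C → C → Prop) → Set C)
    (hS : ∀ r : C → C → Prop, IsTournament r → (S r).Nonempty)
    (hCC : CondorcetConsistent S) :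
    ApprovalMonotonic S ↔ ExclusiveMonotonic S ∧ ENM S := by
  constructor
  · intro hmono
    constructor
    · -- Exclusive monotonicity
      intro r r' c hr hr' himp hc
      -- first: c ∈ S r'
      have hcwin : c ∈ winners S [r] := by
        intro e
        simp only [approvalScore_cons, approvalScore_nil, hc, if_true]
        split_ifs <;> omega
      have hcwin' : c ∈ winners S [r'] :=
        hmono [r] [r'] c (by simp [hr]) (by simp [hr'])
          (List.Forall₂.cons himp List.Forall₂.nil) hcwin
      have hc' : c ∈ S r' := by
        by_contra hcn
        obtain ⟨e, he⟩ := hS r' hr'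
        have := hcwin' e
        simp only [approvalScore_cons, approvalScore_nil, he, hcn, if_true,
          if_false] at this
        omega
      refine ⟨hc', ?_⟩
      intro d hd
      by_contra hdr
      have hdc : d ≠ c := fun h => hdr (h ▸ hc)
      have hT : S (srcT d) = {d} := hCC _ (srcT_tournament d) d (srcT_source d)
      have hcwin2 : c ∈ winners S [r, srcT d] := by
        intro e
        simp only [approvalScore_cons, approvalScore_nil, hT,
          Set.mem_singleton_iff, hc, if_true]
        by_cases hed : e = d
        · subst hed; simp [hdr]
        · simp [hed]; split_ifs <;> omega
      have hcwin2' : c ∈ winners S [r', srcT d] :=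
        hmono _ _ c (by simp [hr, srcT_tournament])
          (by simp [hr', srcT_tournament])
          (List.Forall₂.cons himp
            (List.Forall₂.cons (improvedBy_refl _ c) List.Forall₂.nil)) hcwin2
      have := hcwin2' d
      simp only [approvalScore_cons, approvalScore_nil, hT,
        Set.mem_singleton_iff, hd, hc', Ne.symm hdc, if_true, if_false] at this
      omega
    · -- ENM
      intro r r' c hr hr' himp hcnot hnsub
      by_contra hc'
      obtain ⟨d, hd', hdr⟩ := Set.not_subset.mp hnsub
      have hdc : d ≠ c := fun h => hc' (h ▸ hd')
      have hTc : S (srcT c) = {c} := hCC _ (srcT_tournament c) c (srcT_source c)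
      have hTd : S (srcT d) = {d} := hCC _ (srcT_tournament d) d (srcT_source d)
      have hcwin : c ∈ winners S [r, srcT c, srcT d] := by
        intro e
        simp only [approvalScore_cons, approvalScore_nil, hTc, hTd,
          Set.mem_singleton_iff, hcnot, if_false, hdc.symm]
        by_cases hec : e = c
        · subst hec; simp [hcnot, hdc.symm]
        · by_cases hed : e = d
          · subst hed; simp [hdr, hdc]
          · simp [hec, hed]; split_ifs <;> omega
      have hcwin' : c ∈ winners S [r', srcT c, srcT d] :=
        hmono _ _ c (by simp [hr, srcT_tournament])
          (by simp [hr', srcT_tournament])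
          (List.Forall₂.cons himp
            (List.Forall₂.cons (improvedBy_refl _ c)
              (List.Forall₂.cons (improvedBy_refl _ c) List.Forall₂.nil))) hcwin
      have := hcwin' d
      simp only [approvalScore_cons, approvalScore_nil, hTc, hTd,
        Set.mem_singleton_iff, hd', hc', hdc, Ne.symm hdc, if_true, if_false] at this
      omega
  · rintro ⟨hEM, hENM⟩
    intro E E' c hE hE' h hc
    intro d
    have key := score_swap S hEM hENM hE hE' h d
    have := hc d
    omega
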